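/- Let C be the primitive Reed–Solomon [n, k] code over F_q with q = 2^{2t}, n = q − 1, k = n/3, defined by the check polynomial p(x) = (x−1)(x−ω)⋯(x−ω^{k−1}) for ω a primitive element of F_q. Define a ∈ F_q^{n×n×n} by a(x,y,z) := a'(x, ω^{−k} y, ω^{−2k} z) where a'(x,y,z) = Σ_{i+j+l ≡ 0 mod n} x^i y^j z^l. Then a is a codeword of C ⊞ C ⊞ C, i.e., a(x,y,z)·p(x)·p(y)·p(z) ≡ 0 mod (x^n−1, y^n−1, z^n−1). -/

import Mathlib

noncomputable section

open Polynomial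

/-- Normalized Hamming weight. -/
def normWt {ι F : Type*} [Fintype ι] [Zero F] (x : ι → F) : ℝ :=
  (Nat.card {p : ι // x p ≠ 0} : ℝ) / (Fintype.card ι : ℝ)

/-- Normalized Hamming distance from a word to a set of words. -/
def distTo {ι F : Type*} [Fintype ι] [AddGroup F] (x : ι → F) (S : Set (ι → F)) : ℝ :=
  sInf ((fun c => normWt (x - c)) '' S)

/-- Normalized minimum distance of a code. -/
def minDist {ι F : Type*} [Fintype ι] [Zero F] (S : Set (ι → F)) : ℝ :=
  sInf (normWt '' (S \ {0}))

/-- Restriction of a word on a grid to the axis-`i` line through `y`. -/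
def lineRestrict {F : Type*} {m : ℕ} {n : Fin m → ℕ}
    (x : (∀ j, Fin (n j)) → F) (i : Fin m) (y : ∀ j, Fin (n j)) : Fin (n i) → F :=
  fun s => x (Function.update y i s)

/-- `‖x‖_i`: the fraction of axis-`i` parallel lines on which `x` is nonzero. -/
def lineWt {F : Type*} [Zero F] {m : ℕ} {n : Fin m → ℕ}
    (x : (∀ j, Fin (n j)) → F) (i : Fin m) : ℝ :=
  (Nat.card {y : ∀ j, Fin (n j) // lineRestrict x i y ≠ 0} : ℝ) /
    (Fintype.card (∀ j, Fin (n j)) : ℝ)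

/-- `C^{(i)}`: words all of whose axis-`i` lines belong to `C i`. -/
def axisCode {F : Type*} {m : ℕ} {n : Fin m → ℕ}
    (C : ∀ i, Set (Fin (n i) → F)) (i : Fin m) : Set ((∀ j, Fin (n j)) → F) :=
  {x | ∀ y, lineRestrict x i y ∈ C i}

/-- Tensor product code `C₁ ⊗ ⋯ ⊗ C_m`. -/
def prodCode {F : Type*} {m : ℕ} {n : Fin m → ℕ}
    (C : ∀ i, Set (Fin (n i) → F)) : Set ((∀ j, Fin (n j)) → F) :=
  ⋂ i, axisCode C i

/-- Dual code w.r.t. the standard bilinear form. -/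
def dualCode {ι F : Type*} [Fintype ι] [CommRing F] (S : Set (ι → F)) : Set (ι → F) :=
  {x | ∀ c ∈ S, ∑ p, x p * c p = 0}

/-- `C₁ ⊞ ⋯ ⊞ C_m := (C₁^⊥ ⊗ ⋯ ⊗ C_m^⊥)^⊥`. -/
def boxCode {F : Type*} [CommRing F] {m : ℕ} {n : Fin m → ℕ}
    (C : ∀ i, Set (Fin (n i) → F)) : Set ((∀ j, Fin (n j)) → F) :=
  dualCode (prodCode (fun i => dualCode (C i)))

/-- `ρ`-product-expansion of a collection of codes. -/
def productExpanding {F : Type*} [Field F] {m : ℕ} {n : Fin m → ℕ}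
    (C : ∀ i, Set (Fin (n i) → F)) (ρ : ℝ) : Prop :=
  ∀ c ∈ boxCode C, ∃ a : Fin m → ((∀ j, Fin (n j)) → F),
    (∀ i, a i ∈ axisCode C i) ∧ c = ∑ i, a i ∧
      ρ * ∑ i, lineWt (a i) i ≤ normWt c

/-- The product-expansion constant `ρ(𝒞)`. -/
def prodExpConst {F : Type*} [Field F] {m : ℕ} {n : Fin m → ℕ}
    (C : ∀ i, Set (Fin (n i) → F)) : ℝ :=
  sSup {ρ : ℝ | productExpanding C ρ}

/-- Expected distance under the axis-parallel line test `T_m^1`. -/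
def lineTestE {F : Type*} [Field F] {m : ℕ} {n : Fin m → ℕ}
    (C : ∀ i, Set (Fin (n i) → F)) (x : (∀ j, Fin (n j)) → F) : ℝ :=
  (∑ i, (∑ y : ∀ j, Fin (n j), distTo (lineRestrict x i y) (C i)) /
      (Fintype.card (∀ j, Fin (n j)) : ℝ)) / (m : ℝ)

/-- Robustness constant `ρ_r(T_m^1, ⊗𝒞)` of the axis-parallel line test. -/
def lineRobustConst {F : Type*} [Field F] {m : ℕ} {n : Fin m → ℕ}
    (C : ∀ i, Set (Fin (n i) → F)) : ℝ :=
  sSup {α : ℝ | ∀ x, α * distTo x (prodCode C) ≤ lineTestE C x}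

/-- Agreement-testability constant `ρ_a(⊗𝒞)`. -/
def agreeConst {F : Type*} [Field F] {m : ℕ} {n : Fin m → ℕ}
    (C : ∀ i, Set (Fin (n i) → F)) : ℝ :=
  sSup {α : ℝ | ∀ c : Fin m → ((∀ j, Fin (n j)) → F),
    (∀ i, c i ∈ axisCode C i) → ∃ z ∈ prodCode C,
      α * ((∑ i, lineWt (c i - z) i) / (m : ℝ)) ≤
        (∑ i, ∑ j, normWt (c i - c j)) / ((m : ℝ) ^ 2)}

/-- `C^{⊗k}` on the grid `[n]^k`. -/
def tensorPow {F : Type*} {n : ℕ} (C : Set (Fin n → F)) (k : ℕ) :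
    Set ((Fin k → Fin n) → F) :=
  {x | ∀ (i : Fin k) (y : Fin k → Fin n), (fun s => x (Function.update y i s)) ∈ C}

/-- Restriction of a word to the axis-parallel `k`-flat determined by the axes
`e : Fin k ↪ Fin m` and base point `y`. -/
def flatRestrict {F : Type*} {n m k : ℕ} (x : (Fin m → Fin n) → F)
    (e : Fin k ↪ Fin m) (y : Fin m → Fin n) : (Fin k → Fin n) → F :=
  fun z => x (fun j => if h : ∃ l, e l = j then z h.choose else y j)

/-- Expected distance under the axis-parallel `k`-flat test `T_m^k` for `C^{⊗m}`. -/
def flatTestE {F : Type*} [Field F] {n : ℕ} (C : Set (Fin n → F)) (m k : ℕ)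
    (x : (Fin m → Fin n) → F) : ℝ :=
  (∑ e : Fin k ↪ Fin m, ∑ y : Fin m → Fin n,
      distTo (flatRestrict x e y) (tensorPow C k)) /
    ((Fintype.card (Fin k ↪ Fin m) : ℝ) * (Fintype.card (Fin m → Fin n) : ℝ))

/-- Robustness constant `ρ_r(T_m^k, C^{⊗m})`. -/
def flatRobustConst {F : Type*} [Field F] {n : ℕ} (C : Set (Fin n → F)) (m k : ℕ) : ℝ :=
  sSup {α : ℝ | ∀ x : (Fin m → Fin n) → F,
    α * distTo x (tensorPow C m) ≤ flatTestE C m k x}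

/-- The polynomial `Σ aᵢ xⁱ` of a word of length `n`. -/
def wordPoly {F : Type*} [CommSemiring F] {n : ℕ} (a : Fin n → F) : Polynomial F :=
  ∑ i, Polynomial.C (a i) * Polynomial.X ^ (i : ℕ)

/-- The cyclic code of length `n` with check polynomial `p`. -/
def cyclicCode {F : Type*} [CommRing F] (n : ℕ) (p : Polynomial F) : Set (Fin n → F) :=
  {a | (Polynomial.X ^ n - 1) ∣ p * wordPoly a}

/-- Check polynomial `(x-1)(x-ω)⋯(x-ω^{k-1})` of the primitive Reed–Solomon code. -/
def rsCheck {F : Type*} [CommRing F] (k : ℕ) (ω : F) : Polynomial F :=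
  ∏ i ∈ Finset.range k, (Polynomial.X - Polynomial.C (ω ^ i))

/-- The primitive Reed–Solomon evaluation code of degree `< k` at the nonzero points. -/
def evalRS (F : Type*) [Field F] [Fintype F] (k : ℕ) : Set (Fˣ → F) :=
  {c | ∃ p : Polynomial F, p.degree < (k : ℕ) ∧ ∀ a : Fˣ, c a = p.eval (a : F)}

/-- Words on `ι₁ × ι₂` all of whose columns lie in `S`. -/
def colCode {ι₁ ι₂ F : Type*} (S : Set (ι₁ → F)) : Set (ι₁ × ι₂ → F) :=
  {x | ∀ j, (fun i => x (i, j)) ∈ S}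

/-- Words on `ι₁ × ι₂` all of whose rows lie in `S`. -/
def rowCode {ι₁ ι₂ F : Type*} (S : Set (ι₂ → F)) : Set (ι₁ × ι₂ → F) :=
  {x | ∀ i, (fun j => x (i, j)) ∈ S}

/-- The multivariate polynomial `Σ_y x_y ∏ᵢ Xᵢ^{yᵢ}` of a word on the grid `[n]^m`. -/
def wordPolyMv {F : Type*} [CommSemiring F] {m n : ℕ} (x : (Fin m → Fin n) → F) :
    MvPolynomial (Fin m) F :=
  ∑ y : Fin m → Fin n, MvPolynomial.C (x y) * ∏ i, MvPolynomial.X i ^ ((y i : ℕ))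

lemma pow_mod_of_pow_eq_one' {R : Type*} [Monoid R] {u : R} {n : ℕ} (hu : u ^ n = 1)
    (a : ℕ) : u ^ a = u ^ (a % n) := by
  conv_lhs => rw [← Nat.div_add_mod a n]
  rw [pow_add, pow_mul, hu, one_pow, one_mul]

lemma aeval_mul_congr' {F R : Type*} [CommSemiring F] [CommRing R] [Algebra F R]
    {x u a : R} (h : x * a = u * a) (p : Polynomial F) :
    Polynomial.aeval x p * a = Polynomial.aeval u p * a := by
  have hp : ∀ m : ℕ, x ^ m * a = u ^ m * a := by
    intro m
    induction m with
    | zero => simp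
    | succ m ih =>
      calc x ^ (m + 1) * a = x ^ m * (x * a) := by ring
        _ = x ^ m * (u * a) := by rw [h]
        _ = u * (x ^ m * a) := by ring
        _ = u * (u ^ m * a) := by rw [ih]
        _ = u ^ (m + 1) * a := by ring
  rw [Polynomial.aeval_eq_sum_range, Polynomial.aeval_eq_sum_range,
    Finset.sum_mul, Finset.sum_mul]
  refine Finset.sum_congr rfl fun i _ => ?_
  rw [smul_mul_assoc, smul_mul_assoc, hp i]

set_option maxHeartbeats 2000000 in
/-- the word `a` from the paper is a codeword of `C ⊞ C ⊞ C`. -/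
theorem stmt_3 {F : Type*} [Field F] [Fintype F] (t n k : ℕ) (ht : 1 ≤ t)
    (hcard : Fintype.card F = 2 ^ (2 * t)) (hn : n = Fintype.card F - 1) (hk : n = 3 * k)
    (ω : Fˣ) (hω : ∀ u : Fˣ, u ∈ Subgroup.zpowers ω) :
    (∑ i : Fin n, ∑ j : Fin n, ∑ l : Fin n,
        if ((i : ℕ) + (j : ℕ) + (l : ℕ)) % n = 0 then
          MvPolynomial.C (((ω⁻¹ : Fˣ) : F) ^ (k * (j : ℕ)) *
              ((ω⁻¹ : Fˣ) : F) ^ (2 * k * (l : ℕ))) *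
            (MvPolynomial.X (0 : Fin 3) ^ (i : ℕ) * MvPolynomial.X 1 ^ (j : ℕ) *
              MvPolynomial.X 2 ^ (l : ℕ))
        else 0) *
        Polynomial.aeval (MvPolynomial.X (0 : Fin 3) : MvPolynomial (Fin 3) F)
          (rsCheck k (ω : F)) *
        Polynomial.aeval (MvPolynomial.X (1 : Fin 3) : MvPolynomial (Fin 3) F)
          (rsCheck k (ω : F)) *
        Polynomial.aeval (MvPolynomial.X (2 : Fin 3) : MvPolynomial (Fin 3) F)
          (rsCheck k (ω : F)) ∈
      Ideal.span (Set.range fun i : Fin 3 => MvPolynomial.X i ^ n - 1) := by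
  classical
  have hn2 : 2 ≤ n := by
    have h4 : 4 ≤ Fintype.card F := by
      rw [hcard]
      calc (4:ℕ) = 2 ^ 2 := by norm_num
        _ ≤ 2 ^ (2 * t) := Nat.pow_le_pow_right (by norm_num) (by omega)
    omega
  have hk1 : 1 ≤ k := by omega
  haveI : NeZero n := ⟨by omega⟩
  set w : F := ((ω : Fˣ) : F) with hw
  set v : F := ((ω⁻¹ : Fˣ) : F) with hv
  have hwv : w * v = 1 := by rw [hw, hv, ← Units.val_mul]; simp
  have horder : orderOf ω = n := by
    rw [orderOf_eq_card_of_forall_mem_zpowers hω, Nat.card_eq_fintype_card,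
      Fintype.card_units, hn]
  have hωn : ω ^ n = 1 := by rw [← horder]; exact pow_orderOf_eq_one ω
  have hwn : w ^ n = 1 := by rw [hw, ← Units.val_pow_eq_pow_val, hωn, Units.val_one]
  have hvn : v ^ n = 1 := by
    rw [hv, ← Units.val_pow_eq_pow_val, inv_pow, hωn, inv_one, Units.val_one]
  have hprim : IsPrimitiveRoot w n := by
    have h1 := IsPrimitiveRoot.orderOf ω
    rw [horder] at h1
    exact IsPrimitiveRoot.coe_units_iff.mpr h1
  set S := MvPolynomial (Fin 3) F with hS
  set I : Ideal S := Ideal.span (Set.range fun i : Fin 3 => MvPolynomial.X i ^ n - 1) with hI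
  rw [← Ideal.Quotient.eq_zero_iff_mem, ← Ideal.Quotient.mkₐ_eq_mk F I]
  set π := Ideal.Quotient.mkₐ F I with hπ
  set x := π (MvPolynomial.X (0 : Fin 3)) with hxdef
  set y := π (MvPolynomial.X (1 : Fin 3)) with hydef
  set z := π (MvPolynomial.X (2 : Fin 3)) with hzdef
  have hgen : ∀ i : Fin 3, π (MvPolynomial.X i) ^ n = 1 := by
    intro i
    have hmem : MvPolynomial.X i ^ n - 1 ∈ I := Ideal.subset_span ⟨i, rfl⟩
    have h0 : π (MvPolynomial.X i ^ n - 1) = 0 := by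
      rw [hπ, Ideal.Quotient.mkₐ_eq_mk, Ideal.Quotient.eq_zero_iff_mem]; exact hmem
    rw [map_sub, map_pow, map_one, sub_eq_zero] at h0
    exact h0
  have hxn : x ^ n = 1 := hgen 0
  have hyn : y ^ n = 1 := hgen 1
  have hzn : z ^ n = 1 := hgen 2

  -- the quotient-side word `A` and shifted word `T`
  set A : S ⧸ I := ∑ i : Fin n, ∑ j : Fin n, ∑ l : Fin n,
      if ((i : ℕ) + (j : ℕ) + (l : ℕ)) % n = 0 then
        π (MvPolynomial.C (v ^ (k * (j : ℕ)) * v ^ (2 * k * (l : ℕ)))) *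
          (x ^ (i : ℕ) * y ^ (j : ℕ) * z ^ (l : ℕ))
      else 0 with hA
  set T : S ⧸ I := ∑ i : Fin n, ∑ j : Fin n, ∑ l : Fin n,
      if ((i : ℕ) + (j : ℕ) + (l : ℕ)) % n = 1 then
        π (MvPolynomial.C (v ^ (k * (j : ℕ)) * v ^ (2 * k * (l : ℕ)))) *
          (x ^ (i : ℕ) * y ^ (j : ℕ) * z ^ (l : ℕ))
      else 0 with hT
  have hmodc : ∀ a c : ℕ, c < n → (a % n = c ↔ (a : ZMod n) = (c : ℕ)) := by
    intro a c hc
    constructor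
    · intro h
      have h1 : ((a % n : ℕ) : ZMod n) = ((a : ℕ) : ZMod n) := ZMod.natCast_mod a n
      rw [h] at h1
      exact h1.symm
    · intro h
      have h2 : a ≡ c [MOD n] := (ZMod.natCast_eq_natCast_iff a c n).mp h
      have h3 : a % n = c % n := h2
      rwa [Nat.mod_eq_of_lt hc] at h3
  have hfin : ∀ i : Fin n, ((i + 1 : Fin n) : ℕ) = ((i : ℕ) + 1) % n := by
    intro i
    rw [Fin.val_add, Fin.val_one', Nat.mod_eq_of_lt (show 1 < n by omega)]
  have h1 : x * A = T := by
    rw [hA, hT, Finset.mul_sum]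
    refine Fintype.sum_equiv (Equiv.addRight (1 : Fin n)) _ _ fun i => ?_
    rw [Finset.mul_sum]
    refine Finset.sum_congr rfl fun j _ => ?_
    rw [Finset.mul_sum]
    refine Finset.sum_congr rfl fun l _ => ?_
    rw [mul_ite, mul_zero]
    simp only [Equiv.coe_addRight]
    simp only [hfin i]
    refine if_congr ?_ ?_ rfl
    · rw [hmodc _ 0 (by omega), hmodc _ 1 (by omega)]
      push_cast [ZMod.natCast_mod]
      constructor <;> intro h <;> linear_combination h
    · rw [← pow_mod_of_pow_eq_one' hxn ((i : ℕ) + 1), pow_succ]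
      ring
  have h2 : (π (MvPolynomial.C (v ^ k)) * y) * A = T := by
    rw [hA, hT, Finset.mul_sum]
    refine Finset.sum_congr rfl fun i _ => ?_
    rw [Finset.mul_sum]
    refine Fintype.sum_equiv (Equiv.addRight (1 : Fin n)) _ _ fun j => ?_
    rw [Finset.mul_sum]
    refine Finset.sum_congr rfl fun l _ => ?_
    rw [mul_ite, mul_zero]
    simp only [Equiv.coe_addRight]
    simp only [hfin j]
    refine if_congr ?_ ?_ rfl
    · rw [hmodc _ 0 (by omega), hmodc _ 1 (by omega)]
      push_cast [ZMod.natCast_mod]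
      constructor <;> intro h <;> linear_combination h
    · have hvk : (v ^ k) ^ n = 1 := by rw [← pow_mul, mul_comm k n, pow_mul, hvn, one_pow]
      have e2 : v ^ (k * (((j : ℕ) + 1) % n)) = v ^ k * v ^ (k * (j : ℕ)) := by
        rw [pow_mul, ← pow_mod_of_pow_eq_one' hvk, pow_succ, ← pow_mul]
        ring
      have e1 : y ^ (((j : ℕ) + 1) % n) = y * y ^ (j : ℕ) := by
        rw [← pow_mod_of_pow_eq_one' hyn, pow_succ]
        ring
      rw [e1, e2]
      simp only [MvPolynomial.C_mul, map_mul]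
      ring
  have h3 : (π (MvPolynomial.C (v ^ (2 * k))) * z) * A = T := by
    rw [hA, hT, Finset.mul_sum]
    refine Finset.sum_congr rfl fun i _ => ?_
    rw [Finset.mul_sum]
    refine Finset.sum_congr rfl fun j _ => ?_
    rw [Finset.mul_sum]
    refine Fintype.sum_equiv (Equiv.addRight (1 : Fin n)) _ _ fun l => ?_
    rw [mul_ite, mul_zero]
    simp only [Equiv.coe_addRight]
    simp only [hfin l]
    refine if_congr ?_ ?_ rfl
    · rw [hmodc _ 0 (by omega), hmodc _ 1 (by omega)]
      push_cast [ZMod.natCast_mod]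
      constructor <;> intro h <;> linear_combination h
    · have hv2k : (v ^ (2 * k)) ^ n = 1 := by
        rw [← pow_mul, mul_comm (2 * k) n, pow_mul, hvn, one_pow]
      have e2 : v ^ (2 * k * (((l : ℕ) + 1) % n)) = v ^ (2 * k) * v ^ (2 * k * (l : ℕ)) := by
        rw [pow_mul, ← pow_mod_of_pow_eq_one' hv2k, pow_succ, ← pow_mul]
        ring
      have e1 : z ^ (((l : ℕ) + 1) % n) = z * z ^ (l : ℕ) := by
        rw [← pow_mod_of_pow_eq_one' hzn, pow_succ]
        ring
      rw [e1, e2]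
      simp only [MvPolynomial.C_mul, map_mul]
      ring

  -- derived relations
  have hxz : x * A = (π (MvPolynomial.C (v ^ (2 * k))) * z) * A := by rw [h1, h3]
  have h23 : (π (MvPolynomial.C (v ^ k)) * y) * A
      = (π (MvPolynomial.C (v ^ (2 * k))) * z) * A := by rw [h2, h3]
  have hone : π (MvPolynomial.C (w ^ k)) * π (MvPolynomial.C (v ^ k)) = 1 := by
    rw [← map_mul, ← MvPolynomial.C_mul, ← mul_pow, hwv, one_pow, MvPolynomial.C_1, map_one]
  have hwk2k : π (MvPolynomial.C (w ^ k)) * π (MvPolynomial.C (v ^ (2 * k)))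
      = π (MvPolynomial.C (v ^ k)) := by
    have hc : w ^ k * v ^ (2 * k) = v ^ k := by
      rw [two_mul, pow_add, ← mul_assoc, ← mul_pow, hwv, one_pow, one_mul]
    rw [← map_mul, ← MvPolynomial.C_mul, hc]
  have hyz : y * A = (π (MvPolynomial.C (v ^ k)) * z) * A := by
    calc y * A = (π (MvPolynomial.C (w ^ k)) * π (MvPolynomial.C (v ^ k))) * (y * A) := by
          rw [hone, one_mul]
      _ = π (MvPolynomial.C (w ^ k)) * ((π (MvPolynomial.C (v ^ k)) * y) * A) := by ring
      _ = π (MvPolynomial.C (w ^ k)) * ((π (MvPolynomial.C (v ^ (2 * k))) * z) * A) := by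
          rw [h23]
      _ = (π (MvPolynomial.C (w ^ k)) * π (MvPolynomial.C (v ^ (2 * k)))) * (z * A) := by ring
      _ = (π (MvPolynomial.C (v ^ k)) * z) * A := by rw [hwk2k]; ring
  -- transporting the check polynomial along the relations
  have htx : Polynomial.aeval x (rsCheck k w) * A
      = Polynomial.aeval (π (MvPolynomial.C (v ^ (2 * k))) * z) (rsCheck k w) * A :=
    aeval_mul_congr' hxz _
  have hty : Polynomial.aeval y (rsCheck k w) * A
      = Polynomial.aeval (π (MvPolynomial.C (v ^ k)) * z) (rsCheck k w) * A :=
    aeval_mul_congr' hyz _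
  -- the one-variable polynomial identity
  have halg : ∀ c : F, π (MvPolynomial.C c) = algebraMap F (S ⧸ I) c := by
    intro c
    rw [← MvPolynomial.algebraMap_eq]
    exact π.commutes c
  have hsplit : (Polynomial.X : Polynomial F) ^ n - 1
      = ∏ i ∈ Finset.range n, (Polynomial.X - Polynomial.C (w ^ i)) := by
    have h0 := X_pow_sub_C_eq_prod hprim (show 0 < n by omega) (one_pow n)
    simpa using h0
  have hGfact : ∀ (d : F) (m : ℕ), d * w ^ m = 1 →
      (rsCheck k w).comp (Polynomial.C d * Polynomial.X) =
        Polynomial.C d ^ k *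
          ∏ i ∈ Finset.range k, (Polynomial.X - Polynomial.C (w ^ (m + i))) := by
    intro d m hdm
    rw [show rsCheck k w = ∏ i ∈ Finset.range k, (Polynomial.X - Polynomial.C (w ^ i)) from
      rfl]
    rw [Polynomial.prod_comp]
    have hterm : ∀ i ∈ Finset.range k,
        (Polynomial.X - Polynomial.C (w ^ i)).comp (Polynomial.C d * Polynomial.X)
          = Polynomial.C d * (Polynomial.X - Polynomial.C (w ^ (m + i))) := by
      intro i _
      rw [Polynomial.sub_comp, Polynomial.X_comp, Polynomial.C_comp]
      have hx2 : (w : F) ^ i = d * w ^ (m + i) := by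
        rw [pow_add, ← mul_assoc, hdm, one_mul]
      rw [mul_sub, ← Polynomial.C_mul, ← hx2]
    rw [Finset.prod_congr rfl hterm, Finset.prod_mul_distrib, Finset.prod_const,
      Finset.card_range]
  have hd2 : v ^ (2 * k) * w ^ (k + k) = 1 := by
    rw [show k + k = 2 * k by ring, ← mul_pow, mul_comm v w, hwv, one_pow]
  have hd1 : v ^ k * w ^ k = 1 := by rw [← mul_pow, mul_comm v w, hwv, one_pow]
  have hG : (rsCheck k w).comp (Polynomial.C (v ^ (2 * k)) * Polynomial.X) *
      ((rsCheck k w).comp (Polynomial.C (v ^ k) * Polynomial.X) * rsCheck k w) =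
      Polynomial.X ^ n - 1 := by
    rw [hGfact _ _ hd2, hGfact _ _ hd1]
    rw [hsplit, show n = k + (k + k) by omega, Finset.prod_range_add, Finset.prod_range_add]
    have hre : (∏ i ∈ Finset.range k, (Polynomial.X - Polynomial.C (w ^ (k + (k + i)))))
        = ∏ i ∈ Finset.range k, (Polynomial.X - Polynomial.C (w ^ (k + k + i))) := by
      refine Finset.prod_congr rfl fun i _ => by rw [add_assoc]
    rw [hre]
    have hcc : (Polynomial.C (v ^ (2 * k))) ^ k * (Polynomial.C (v ^ k)) ^ k
        = (1 : Polynomial F) := by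
      rw [← Polynomial.C_pow, ← Polynomial.C_pow, ← Polynomial.C_mul, ← mul_pow, ← pow_add,
        show 2 * k + k = n by omega, hvn, one_pow, Polynomial.C_1]
    rw [show rsCheck k w = ∏ i ∈ Finset.range k, (Polynomial.X - Polynomial.C (w ^ i)) from
      rfl]
    linear_combination ((∏ i ∈ Finset.range k, (Polynomial.X - Polynomial.C (w ^ i))) *
      (∏ i ∈ Finset.range k, (Polynomial.X - Polynomial.C (w ^ (k + i)))) *
      (∏ i ∈ Finset.range k, (Polynomial.X - Polynomial.C (w ^ (k + k + i))))) * hcc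
  -- the product of the three transported factors is zero
  have hcomp : ∀ d : F, Polynomial.aeval (π (MvPolynomial.C d) * z) (rsCheck k w)
      = Polynomial.aeval z ((rsCheck k w).comp (Polynomial.C d * Polynomial.X)) := by
    intro d
    rw [Polynomial.aeval_comp]
    congr 1
    rw [halg]
    simp
  have hzero : Polynomial.aeval (π (MvPolynomial.C (v ^ (2 * k))) * z) (rsCheck k w) *
      (Polynomial.aeval (π (MvPolynomial.C (v ^ k)) * z) (rsCheck k w) *
        Polynomial.aeval z (rsCheck k w)) = 0 := by
    rw [hcomp, hcomp, ← map_mul, ← map_mul, hG, map_sub, map_pow, Polynomial.aeval_X,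
      map_one, hzn, sub_self]
  -- rewrite the goal and conclude
  rw [map_mul, map_mul, map_mul]
  have hAeq : π (∑ i : Fin n, ∑ j : Fin n, ∑ l : Fin n,
      if ((i : ℕ) + (j : ℕ) + (l : ℕ)) % n = 0 then
        MvPolynomial.C (v ^ (k * (j : ℕ)) * v ^ (2 * k * (l : ℕ))) *
          (MvPolynomial.X (0 : Fin 3) ^ (i : ℕ) * MvPolynomial.X 1 ^ (j : ℕ) *
            MvPolynomial.X 2 ^ (l : ℕ))
      else 0) = A := by
    rw [hA, map_sum]
    refine Finset.sum_congr rfl fun i _ => ?_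
    rw [map_sum]
    refine Finset.sum_congr rfl fun j _ => ?_
    rw [map_sum]
    refine Finset.sum_congr rfl fun l _ => ?_
    rw [apply_ite π, map_zero]
    refine if_congr Iff.rfl ?_ rfl
    have hmono : ∀ (c : F) (a b d : ℕ),
        π (MvPolynomial.C c * (MvPolynomial.X 0 ^ a * MvPolynomial.X 1 ^ b *
            MvPolynomial.X 2 ^ d)) =
          π (MvPolynomial.C c) * (π (MvPolynomial.X 0) ^ a * π (MvPolynomial.X 1) ^ b *
            π (MvPolynomial.X 2) ^ d) := by
      intro c a b d
      rw [map_mul, map_mul, map_mul, map_pow, map_pow, map_pow]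
    rw [hmono]
  rw [hAeq]
  have hπaeval : ∀ i : Fin 3,
      π (Polynomial.aeval (MvPolynomial.X i : MvPolynomial (Fin 3) F) (rsCheck k w))
        = Polynomial.aeval (π (MvPolynomial.X i)) (rsCheck k w) := fun i =>
    (Polynomial.aeval_algHom_apply π (MvPolynomial.X i) (rsCheck k w)).symm
  rw [hπaeval 0, hπaeval 1, hπaeval 2]
  linear_combination (Polynomial.aeval y (rsCheck k w) * Polynomial.aeval z (rsCheck k w)) *
      htx +
    (Polynomial.aeval (π (MvPolynomial.C (v ^ (2 * k))) * z) (rsCheck k w) *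
        Polynomial.aeval z (rsCheck k w)) * hty +
    A * hzero


end
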